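/- arXiv:2208.08400 — 3 statements merged into one kernel-verified Lean document; each statement's English description precedes it below -/
import Mathlib

section
/- Let b be a bounded function on [0,1] and suppose there exists a partition 0 = z₀ < z₁ < ... < z_N = 1 such that b is monotone and of one sign on each open subinterval (z_j, z_{j+1}). Let s_k be the alternating ±1 step function on dyadic intervals of length 2^{-k}. Then there is an absolute constant C with |∫₀¹ b(x) s_k(x) dx| ≤ C · N · 2^{-k} · ‖b‖_∞. -/
open MeasureTheory Set
noncomputable def sAlt (k : ℕ) (x : ℝ) : ℝ :=
  if Even ⌊x * 2 ^ k⌋ then 1 else -1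

lemma sAlt_meas (k : ℕ) : Measurable (sAlt k) := by
  have h : Measurable fun x : ℝ => ⌊x * 2 ^ k⌋ :=
    Int.measurable_floor.comp (measurable_id.mul_const _)
  unfold sAlt
  exact Measurable.ite (h (MeasurableSet.of_discrete (s := {n : ℤ | Even n})))
    measurable_const measurable_const

lemma sAlt_abs (k : ℕ) (x : ℝ) : |sAlt k x| = 1 := by
  unfold sAlt; split <;> simp

lemma pow_cancel (k : ℕ) : (2:ℝ) ^ (-(k:ℤ)) * 2 ^ (k:ℕ) = 1 := by
  rw [← zpow_natCast (2:ℝ) k, ← zpow_add₀ (by norm_num : (2:ℝ) ≠ 0)]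
  simp

lemma key_cancel (k : ℕ) (y : ℝ) : y * 2 ^ (-(k:ℤ)) * 2 ^ (k:ℕ) = y := by
  rw [mul_assoc, pow_cancel, mul_one]

lemma sAlt_on_cell (k : ℕ) (i : ℤ) (x : ℝ)
    (h1 : (i:ℝ) * 2 ^ (-(k:ℤ)) ≤ x) (h2 : x < ((i:ℝ) + 1) * 2 ^ (-(k:ℤ))) :
    sAlt k x = (-1 : ℝ) ^ i := by
  have hq : (0:ℝ) < 2 ^ (k:ℕ) := by positivity
  have hfloor : ⌊x * 2 ^ (k:ℕ)⌋ = i := by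
    rw [Int.floor_eq_iff]
    constructor
    · calc (i:ℝ) = (i:ℝ) * 2 ^ (-(k:ℤ)) * 2 ^ (k:ℕ) := (key_cancel k _).symm
        _ ≤ x * 2 ^ (k:ℕ) := mul_le_mul_of_nonneg_right h1 hq.le
    · calc x * 2 ^ (k:ℕ) < ((i:ℝ)+1) * 2 ^ (-(k:ℤ)) * 2 ^ (k:ℕ) :=
          mul_lt_mul_of_pos_right h2 hq
        _ = (i:ℝ) + 1 := key_cancel k _
  unfold sAlt
  rw [hfloor]
  rcases Int.even_or_odd i with he | ho
  · rw [if_pos he, he.neg_one_zpow]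
  · rw [if_neg (Int.not_even_iff_odd.mpr ho), ho.neg_one_zpow]

lemma altsum (A : ℕ → ℝ) (K : ℝ) (hA : Monotone A) (hK : ∀ i, |A i| ≤ K) (L : ℕ) :
    |∑ i ∈ Finset.range L, (-1 : ℝ) ^ i * A i| ≤ 2 * K := by
  have key : ∀ L : ℕ, (Even L → (∑ i ∈ Finset.range L, (-1 : ℝ) ^ i * A i) ≤ 0 ∧
        A 0 - A L ≤ ∑ i ∈ Finset.range L, (-1 : ℝ) ^ i * A i) ∧
      (¬ Even L → A 0 ≤ (∑ i ∈ Finset.range L, (-1 : ℝ) ^ i * A i) ∧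
        (∑ i ∈ Finset.range L, (-1 : ℝ) ^ i * A i) ≤ A L) := by
    intro L
    induction L with
    | zero => simp
    | succ n ih =>
      rw [Finset.sum_range_succ]
      rcases Nat.even_or_odd n with he | ho
      · obtain ⟨h1, h2⟩ := ih.1 he
        have hs : (-1 : ℝ) ^ n = 1 := he.neg_one_pow
        constructor
        · intro hc; exact absurd (Nat.even_add_one.mp hc) (by simpa using he)
        · intro _
          rw [hs]
          refine ⟨by nlinarith, by nlinarith [hA (Nat.le_succ n)]⟩
      · obtain ⟨h1, h2⟩ := ih.2 (Nat.not_even_iff_odd.mpr ho)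
        have hs : (-1 : ℝ) ^ n = -1 := ho.neg_one_pow
        constructor
        · intro _
          rw [hs]
          refine ⟨by nlinarith, by nlinarith [hA (Nat.le_succ n)]⟩
        · intro hc
          exact absurd (Nat.even_add_one.mpr (Nat.not_even_iff_odd.mpr ho)) hc
  have h0 := hK 0
  have hL := hK L
  rcases Nat.even_or_odd L with he | ho
  · obtain ⟨h1, h2⟩ := (key L).1 he
    rw [abs_le] at *; constructor <;> nlinarith
  · obtain ⟨h1, h2⟩ := (key L).2 (Nat.not_even_iff_odd.mpr ho)
    rw [abs_le] at *; constructor <;> nlinarith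

lemma piece (k : ℕ) (b : ℝ → ℝ) (M : ℝ) (a c : ℝ) (hac : a ≤ c)
    (hsub : Icc a c ⊆ Icc (0:ℝ) 1)
    (hmono : MonotoneOn b (Ioo a c))
    (hM : ∀ x ∈ Icc (0:ℝ) 1, |b x| ≤ M) :
    IntervalIntegrable (fun x => b x * sAlt k x) volume a c ∧
      |∫ x in a..c, b x * sAlt k x| ≤ 4 * 2 ^ (-(k:ℤ)) * M := by
  set h : ℝ := 2 ^ (-(k:ℤ)) with hh
  have hp : 0 < h := by positivity
  have hM0 : 0 ≤ M := le_trans (abs_nonneg _) (hM 0 ⟨le_refl 0, zero_le_one⟩)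
  have hIcc : ∀ x, a ≤ x → x ≤ c → |b x| ≤ M := fun x h1 h2 => hM x (hsub ⟨h1, h2⟩)
  -- integrability
  have hbm : AEMeasurable b (volume.restrict (Ioo a c)) :=
    aemeasurable_restrict_of_monotoneOn measurableSet_Ioo hmono
  have hbd : ∀ᵐ x ∂(volume.restrict (Ioo a c)), ‖b x‖ ≤ M :=
    (ae_restrict_iff' measurableSet_Ioo).mpr (Filter.Eventually.of_forall
      fun x hx => by rw [Real.norm_eq_abs]; exact hIcc x hx.1.le hx.2.le)
  have hbInt : IntegrableOn b (Ioo a c) :=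
    Integrable.mono' (integrableOn_const measure_Ioo_lt_top.ne)
      hbm.aestronglyMeasurable hbd
  have hfInt : IntegrableOn (fun x => b x * sAlt k x) (Ioo a c) := by
    refine Integrable.mono' (g := fun _ => M)
      (integrableOn_const measure_Ioo_lt_top.ne)
      (hbm.mul (sAlt_meas k).aemeasurable).aestronglyMeasurable ?_
    refine (ae_restrict_iff' measurableSet_Ioo).mpr (Filter.Eventually.of_forall
      fun x hx => ?_)
    rw [Real.norm_eq_abs, abs_mul, sAlt_abs, mul_one]
    exact hIcc x hx.1.le hx.2.le
  have hfIntv : IntervalIntegrable (fun x => b x * sAlt k x) volume a c :=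
    (intervalIntegrable_iff_integrableOn_Ioo_of_le hac).mpr hfInt
  refine ⟨hfIntv, ?_⟩
  have hbound : ∀ u v : ℝ, a ≤ u → v ≤ c → u ≤ v →
      |∫ x in u..v, b x * sAlt k x| ≤ M * (v - u) := by
    intro u v hu hv huv
    have key := intervalIntegral.norm_integral_le_of_norm_le_const (C := M)
      (f := fun x => b x * sAlt k x) (a := u) (b := v) ?_
    · rw [abs_of_nonneg (show (0:ℝ) ≤ v - u by linarith)] at key
      exact key
    · intro x hx
      rw [uIoc_of_le huv] at hx
      rw [Real.norm_eq_abs, abs_mul, sAlt_abs, mul_one]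
      exact hIcc x (le_trans hu hx.1.le) (le_trans hx.2 hv)
  by_cases hsmall : c - a ≤ 2 * h
  · calc |∫ x in a..c, b x * sAlt k x| ≤ M * (c - a) := hbound a c le_rfl le_rfl hac
      _ ≤ 4 * h * M := by nlinarith
  push_neg at hsmall
  set m : ℤ := ⌈a / h⌉ with hm
  set n : ℤ := ⌊c / h⌋ with hn
  have hdiv : ∀ y : ℝ, y / h * h = y := fun y => div_mul_cancel₀ y hp.ne'
  have hm1 : a ≤ (m:ℝ) * h := by
    calc a = a / h * h := (hdiv a).symm
      _ ≤ (m:ℝ) * h := mul_le_mul_of_nonneg_right (Int.le_ceil _) hp.le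
  have hm2 : (m:ℝ) * h ≤ a + h := by
    have h1 : ((m:ℝ)) < a / h + 1 := Int.ceil_lt_add_one _
    have h2 := mul_lt_mul_of_pos_right h1 hp
    have h3 : (a / h + 1) * h = a + h := by rw [add_mul, hdiv, one_mul]
    linarith
  have hn1 : (n:ℝ) * h ≤ c := by
    calc (n:ℝ) * h ≤ c / h * h := mul_le_mul_of_nonneg_right (Int.floor_le _) hp.le
      _ = c := hdiv c
  have hn2 : c ≤ (n:ℝ) * h + h := by
    have h1 : c / h < (n:ℝ) + 1 := Int.lt_floor_add_one _
    have h2 := mul_lt_mul_of_pos_right h1 hp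
    have h3 : (c / h) * h = c := hdiv c
    nlinarith
  have hmn : m < n := by
    have : (m:ℝ) * h < (n:ℝ) * h := by linarith
    exact_mod_cast (mul_lt_mul_iff_of_pos_right hp).mp this
  set L : ℕ := (n - m).toNat with hLdef
  have hLcast : (L:ℤ) = n - m := Int.toNat_of_nonneg (by omega)
  have hL1 : 1 ≤ L := by omega
  have hLr : (m:ℝ) + (L:ℝ) = (n:ℝ) := by
    exact_mod_cast congrArg (Int.cast : ℤ → ℝ) (by omega : (m + (L:ℤ) : ℤ) = n)
  set g : ℕ → ℝ := fun i => ((m:ℝ) + i) * h with hgdef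
  have hg0 : g 0 = (m:ℝ) * h := by simp [hgdef]
  have hgL : g L = (n:ℝ) * h := by rw [hgdef]; simp only; rw [hLr]
  have hgmono : ∀ i j : ℕ, i ≤ j → g i ≤ g j := by
    intro i j hij
    have : ((i:ℝ)) ≤ (j:ℝ) := by exact_mod_cast hij
    exact mul_le_mul_of_nonneg_right (by linarith) hp.le
  have hga : ∀ i : ℕ, a ≤ g i := fun i => le_trans (by rw [← hg0] at hm1; exact hm1)
    (hgmono 0 i (Nat.zero_le i))
  have hgc : ∀ i : ℕ, i ≤ L → g i ≤ c := fun i hi =>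
    le_trans (hgmono i L hi) (by rw [hgL]; exact hn1)
  have hglen : ∀ i : ℕ, g (i+1) - g i = h := by
    intro i; rw [hgdef]; push_cast; ring
  have hsubInt : ∀ u v : ℝ, a ≤ u → u ≤ c → a ≤ v → v ≤ c →
      IntervalIntegrable (fun x => b x * sAlt k x) volume u v := by
    intro u v h1 h2 h3 h4
    refine hfIntv.mono_set ?_
    rw [uIcc_of_le hac]
    exact uIcc_subset_Icc ⟨h1, h2⟩ ⟨h3, h4⟩
  -- splitting
  have i1 := hsubInt a (g 0) le_rfl hac (hga 0) (hgc 0 (Nat.zero_le L))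
  have i2 := hsubInt (g 0) (g L) (hga 0) (hgc 0 (Nat.zero_le L)) (hga L) (hgc L le_rfl)
  have i3 := hsubInt (g L) c (hga L) (hgc L le_rfl) hac le_rfl
  have i23 := hsubInt (g 0) c (hga 0) (hgc 0 (Nat.zero_le L)) hac le_rfl
  have split1 : ∫ x in a..c, b x * sAlt k x =
      (∫ x in a..(g 0), b x * sAlt k x) + ((∫ x in (g 0)..(g L), b x * sAlt k x)
        + (∫ x in (g L)..c, b x * sAlt k x)) := by
    rw [intervalIntegral.integral_add_adjacent_intervals i2 i3,
      intervalIntegral.integral_add_adjacent_intervals i1 i23]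
  have sumeq : (∑ i ∈ Finset.range L, ∫ x in (g i)..(g (i+1)), b x * sAlt k x) =
      ∫ x in (g 0)..(g L), b x * sAlt k x :=
    intervalIntegral.sum_integral_adjacent_intervals fun i hi =>
      hsubInt (g i) (g (i+1)) (hga i) (hgc i hi.le) (hga (i+1)) (hgc (i+1) hi)
  -- cell values
  set Acell : ℕ → ℝ := fun i => ∫ x in Ioo (g i) (g (i+1)), b x with hAcelldef
  have hcellval : ∀ i : ℕ, (∫ x in (g i)..(g (i+1)), b x * sAlt k x)
      = (-1:ℝ) ^ (m + (i:ℤ)) * Acell i := by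
    intro i
    rw [intervalIntegral.integral_of_le (hgmono i (i+1) (Nat.le_succ i)),
      integral_Ioc_eq_integral_Ioo]
    rw [setIntegral_congr_fun measurableSet_Ioo
      (show EqOn (fun x => b x * sAlt k x) (fun x => b x * (-1:ℝ)^(m + (i:ℤ)))
        (Ioo (g i) (g (i+1))) from fun x hx => by
          show b x * sAlt k x = b x * (-1:ℝ) ^ (m + (i:ℤ))
          have e1 : ((m + (i:ℤ) : ℤ):ℝ) * h = g i := by push_cast [hgdef]; ring
          have e2 : (((m + (i:ℤ) : ℤ):ℝ) + 1) * h = g (i+1) := by push_cast [hgdef]; ring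
          rw [sAlt_on_cell k (m + (i:ℤ)) x (by rw [e1]; exact hx.1.le)
            (by rw [e2]; exact hx.2)])]
    rw [MeasureTheory.integral_mul_const]
    ring
  -- integrability of b on cells
  have hbcell : ∀ i : ℕ, i + 1 ≤ L → IntegrableOn b (Ioo (g i) (g (i+1))) := by
    intro i hi
    refine hbInt.mono_set (fun x hx => ⟨?_, ?_⟩)
    · exact lt_of_le_of_lt (hga i) hx.1
    · exact lt_of_lt_of_le hx.2 (by
        have := hgc (i+1) hi
        -- need strict: x < g (i+1) ≤ c
        exact this)
  -- adjacency
  have hadj : ∀ i : ℕ, i + 2 ≤ L → Acell i ≤ Acell (i + 1) := by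
    intro i hi
    set t := g (i + 1) with ht
    have htmem : t ∈ Ioo a c := by
      constructor
      · calc a < a + h := by linarith
          _ ≤ (m:ℝ) * h + h := by linarith
          _ ≤ g (i+1) := by
              rw [hgdef]; push_cast
              have : (0:ℝ) ≤ (i:ℝ) := Nat.cast_nonneg i
              nlinarith
      · have h1 : g (i+1) + h ≤ g L := by
          have h2 := hgmono (i+2) L hi
          have h3 : g (i+2) = g (i+1) + h := by rw [← hglen (i+1)]; ring
          linarith
        rw [hgL] at h1
        linarith
    have hvol : (volume (Ioo (g i) (g (i+1)))).toReal = h := by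
      rw [Real.volume_Ioo, ENNReal.toReal_ofReal (by linarith [hglen i] : (0:ℝ) ≤ g (i+1) - g i)]
      exact hglen i
    have hvol2 : (volume (Ioo (g (i+1)) (g (i+2)))).toReal = h := by
      rw [Real.volume_Ioo, ENNReal.toReal_ofReal (by linarith [hglen (i+1)] : (0:ℝ) ≤ g (i+2) - g (i+1))]
      exact hglen (i+1)
    have hsub1 : Ioo (g i) (g (i+1)) ⊆ Ioo a c := fun x hx =>
      ⟨lt_of_le_of_lt (hga i) hx.1, lt_of_lt_of_le hx.2 (hgc (i+1) (by omega))⟩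
    have hsub2 : Ioo (g (i+1)) (g (i+2)) ⊆ Ioo a c := fun x hx =>
      ⟨lt_of_le_of_lt (hga (i+1)) hx.1, lt_of_lt_of_le hx.2 (hgc (i+2) hi)⟩
    have step1 : Acell i ≤ b t * h := by
      calc Acell i ≤ ∫ _ in Ioo (g i) (g (i+1)), b t := by
            refine setIntegral_mono_on (hbcell i (by omega))
              (integrableOn_const measure_Ioo_lt_top.ne) measurableSet_Ioo
              (fun x hx => hmono (hsub1 hx) htmem hx.2.le)
        _ = b t * h := by rw [setIntegral_const, smul_eq_mul, measureReal_def, hvol, mul_comm]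
    have step2 : b t * h ≤ Acell (i+1) := by
      calc b t * h = ∫ _ in Ioo (g (i+1)) (g (i+2)), b t := by
            rw [setIntegral_const, smul_eq_mul, measureReal_def, hvol2, mul_comm]
        _ ≤ Acell (i+1) := by
            refine setIntegral_mono_on
              (integrableOn_const measure_Ioo_lt_top.ne)
              (hbcell (i+1) hi) measurableSet_Ioo
              (fun x hx => hmono htmem (hsub2 hx) hx.1.le)
    linarith
  -- clamped sequence
  set A : ℕ → ℝ := fun i => Acell (min i (L - 1)) with hAdef
  have hAmono : Monotone A := by
    refine monotone_nat_of_le_succ fun p => ?_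
    rcases le_or_gt (p + 2) L with hc1 | hc1
    · rw [hAdef]; simp only
      rw [min_eq_left (by omega), min_eq_left (by omega)]
      exact hadj p hc1
    · rw [hAdef]; simp only
      rw [min_eq_right (by omega), min_eq_right (by omega)]
  have hAbd : ∀ i, |A i| ≤ M * h := by
    intro i
    rw [hAdef]; simp only
    set q := min i (L - 1) with hq
    have hq1 : q + 1 ≤ L := by omega
    have hvol : (volume (Ioo (g q) (g (q+1)))).toReal = h := by
      rw [Real.volume_Ioo, ENNReal.toReal_ofReal (by linarith [hglen q] : (0:ℝ) ≤ g (q+1) - g q)]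
      exact hglen q
    have := norm_setIntegral_le_of_norm_le_const (μ := volume)
      (s := Ioo (g q) (g (q+1))) (C := M) (f := b) measure_Ioo_lt_top
      (fun x hx => by
        rw [Real.norm_eq_abs]
        exact hIcc x (le_trans (hga q) hx.1.le) (le_trans hx.2.le (hgc (q+1) hq1)))
    rw [measureReal_def, hvol] at this
    exact this
  -- middle bound
  have hmid : |∫ x in (g 0)..(g L), b x * sAlt k x| ≤ 2 * (M * h) := by
    rw [← sumeq]
    have congr1 : ∀ i ∈ Finset.range L,
        (∫ x in (g i)..(g (i+1)), b x * sAlt k x) = (-1:ℝ)^m * ((-1:ℝ)^(i:ℕ) * A i) := by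
      intro i hi
      have hiL := Finset.mem_range.mp hi
      rw [hcellval i]
      have : A i = Acell i := by
        rw [hAdef]; simp only
        rw [min_eq_left (by omega : i ≤ L - 1)]
      rw [this]
      rw [zpow_add₀ (by norm_num : (-1:ℝ) ≠ 0), zpow_natCast]
      ring
    rw [Finset.sum_congr rfl congr1, ← Finset.mul_sum, abs_mul]
    have : |(-1:ℝ)^m| = 1 := by
      rcases Int.even_or_odd m with he | ho
      · rw [he.neg_one_zpow]; norm_num
      · rw [ho.neg_one_zpow]; norm_num
    rw [this, one_mul]
    exact altsum A (M * h) hAmono hAbd L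
  -- edges
  have hleft : |∫ x in a..(g 0), b x * sAlt k x| ≤ M * h := by
    calc |∫ x in a..(g 0), b x * sAlt k x| ≤ M * (g 0 - a) :=
          hbound a (g 0) le_rfl (hgc 0 (Nat.zero_le L)) (hga 0)
      _ ≤ M * h := by rw [hg0]; nlinarith
  have hright : |∫ x in (g L)..c, b x * sAlt k x| ≤ M * h := by
    calc |∫ x in (g L)..c, b x * sAlt k x| ≤ M * (c - g L) :=
          hbound (g L) c (hga L) le_rfl (hgc L le_rfl)
      _ ≤ M * h := by rw [hgL]; nlinarith
  rw [split1]
  calc |(∫ x in a..(g 0), b x * sAlt k x) + ((∫ x in (g 0)..(g L), b x * sAlt k x)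
        + (∫ x in (g L)..c, b x * sAlt k x))|
      ≤ |∫ x in a..(g 0), b x * sAlt k x| + (|∫ x in (g 0)..(g L), b x * sAlt k x|
        + |∫ x in (g L)..c, b x * sAlt k x|) := by
        exact (abs_add_le _ _).trans (by gcongr; exact abs_add_le _ _)
    _ ≤ 4 * h * M := by linarith

lemma piece' (k : ℕ) (b : ℝ → ℝ) (M : ℝ) (a c : ℝ) (hac : a ≤ c)
    (hsub : Icc a c ⊆ Icc (0:ℝ) 1)
    (hmono : MonotoneOn b (Ioo a c) ∨ AntitoneOn b (Ioo a c))
    (hM : ∀ x ∈ Icc (0:ℝ) 1, |b x| ≤ M) :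
    IntervalIntegrable (fun x => b x * sAlt k x) volume a c ∧
      |∫ x in a..c, b x * sAlt k x| ≤ 4 * 2 ^ (-(k:ℤ)) * M := by
  rcases hmono with hm | hm
  · exact piece k b M a c hac hsub hm hM
  · have hm' : MonotoneOn (fun x => -b x) (Ioo a c) :=
      fun x hx y hy hxy => neg_le_neg (hm hx hy hxy)
    have hM' : ∀ x ∈ Icc (0:ℝ) 1, |-b x| ≤ M := fun x hx => by
      rw [abs_neg]; exact hM x hx
    obtain ⟨hint, hbnd⟩ := piece k (fun x => -b x) M a c hac hsub hm' hM'
    have heq : (fun x => -b x * sAlt k x) = fun x => -(b x * sAlt k x) := by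
      funext x; ring
    rw [heq] at hint hbnd
    constructor
    · have := hint.neg
      have e2 : (-fun x => -(b x * sAlt k x)) = fun x => b x * sAlt k x := by
        funext x; simp
      rwa [e2] at this
    · rw [intervalIntegral.integral_neg, abs_neg] at hbnd
      exact hbnd

/-- There is an absolute constant `C` such that: if `b` is bounded by `M` on `[0,1]` and there is
a partition `0 = z₀ < z₁ < ... < z_N = 1` such that `b` is monotone and of one sign on each
open subinterval `(z_j, z_{j+1})`, then `|∫₀¹ b(x) s_k(x) dx| ≤ C · N · 2^{-k} · M`. -/
theorem stmt1 :
    ∃ C : ℝ, 0 < C ∧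
      ∀ (b : ℝ → ℝ) (M : ℝ) (N k : ℕ) (z : ℕ → ℝ),
        0 < N →
        z 0 = 0 → z N = 1 → (∀ j < N, z j < z (j + 1)) →
        (∀ j < N,
          (MonotoneOn b (Ioo (z j) (z (j+1))) ∨ AntitoneOn b (Ioo (z j) (z (j+1)))) ∧
          ((∀ x ∈ Ioo (z j) (z (j+1)), 0 ≤ b x) ∨ (∀ x ∈ Ioo (z j) (z (j+1)), b x ≤ 0))) →
        (∀ x ∈ Icc (0:ℝ) 1, |b x| ≤ M) →
        |∫ x in (0:ℝ)..1, b x * sAlt k x| ≤ C * N * (2:ℝ) ^ (-(k:ℤ)) * M := by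
  refine ⟨4, by norm_num, ?_⟩
  intro b M N k z hN hz0 hzN hz hpieces hM
  set h : ℝ := 2 ^ (-(k:ℤ)) with hh
  have hzmono : ∀ j ≤ N, ∀ i ≤ j, z i ≤ z j := by
    intro j hj
    induction j with
    | zero => intro i hi; rw [Nat.le_zero.mp hi]
    | succ p ih =>
      intro i hi
      rcases Nat.lt_succ_iff_lt_or_eq.mp (Nat.lt_succ_of_le hi) with h1 | h1
      · exact le_trans (ih (by omega) i (by omega)) (hz p (by omega)).le
      · rw [h1]
  have hkey : ∀ j < N, IntervalIntegrable (fun x => b x * sAlt k x) volume (z j) (z (j+1)) ∧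
      |∫ x in (z j)..(z (j+1)), b x * sAlt k x| ≤ 4 * h * M := by
    intro j hj
    refine piece' k b M (z j) (z (j+1)) (hz j hj).le ?_ (hpieces j hj).1 hM
    intro x hx
    constructor
    · calc (0:ℝ) = z 0 := hz0.symm
        _ ≤ z j := hzmono j (by omega) 0 (by omega)
        _ ≤ x := hx.1
    · calc x ≤ z (j+1) := hx.2
        _ ≤ z N := hzmono N le_rfl (j+1) (by omega)
        _ = 1 := hzN
  have hsplit : (∑ j ∈ Finset.range N, ∫ x in (z j)..(z (j+1)), b x * sAlt k x) =
      ∫ x in (0:ℝ)..1, b x * sAlt k x := by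
    rw [← hz0, ← hzN]
    exact intervalIntegral.sum_integral_adjacent_intervals fun j hj => (hkey j hj).1
  rw [← hsplit]
  calc |∑ j ∈ Finset.range N, ∫ x in (z j)..(z (j+1)), b x * sAlt k x|
      ≤ ∑ j ∈ Finset.range N, |∫ x in (z j)..(z (j+1)), b x * sAlt k x| :=
        Finset.abs_sum_le_sum_abs _ _
    _ ≤ ∑ _j ∈ Finset.range N, 4 * h * M :=
        Finset.sum_le_sum fun j hj => (hkey j (Finset.mem_range.mp hj)).2
    _ = N * (4 * h * M) := by rw [Finset.sum_const, Finset.card_range, nsmul_eq_mul]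
    _ = 4 * N * h * M := by ring
end

section
/- Let ε > 0 and let X₁, X₂, ... be i.i.d. random variables with P(X_n = 1−ε) = P(X_n = 1+ε) = 1/2. Set Y₀ = 1 and Y_n = X₁ ⋯ X_n. Given a ∈ (0,1), define the hitting time T_a = inf{ n : Y_n ≥ 1/((1+ε)a) }. Then P(T_a < ∞) ≥ a. -/
open MeasureTheory ProbabilityTheory Set Finset
open scoped ENNReal

private lemma twoPoint_integral {Ω : Type*} [MeasurableSpace Ω] (μ : Measure Ω)
    [IsProbabilityMeasure μ] (Z : Ω → ℝ) (hZ : Measurable Z) {b c : ℝ} (hbc : b ≠ c)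
    (hb : μ {ω | Z ω = b} = 1/2) (hc : μ {ω | Z ω = c} = 1/2) (f : ℝ → ℝ) :
    ∫ ω, f (Z ω) ∂μ = (f b + f c) / 2 := by
  have hSb : MeasurableSet {ω | Z ω = b} := hZ (measurableSet_singleton b)
  have hSc : MeasurableSet {ω | Z ω = c} := hZ (measurableSet_singleton c)
  have hdisj : Disjoint {ω | Z ω = b} {ω | Z ω = c} := by
    rw [Set.disjoint_left]; rintro ω h1 h2; exact hbc ((h1 : Z ω = b).symm.trans h2)
  have hun : μ ({ω | Z ω = b} ∪ {ω | Z ω = c}) = 1 := by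
    rw [measure_union hdisj hSc, hb, hc, ENNReal.add_halves]
  have hae : ∀ᵐ ω ∂μ, ω ∈ {ω | Z ω = b} ∪ {ω | Z ω = c} := by
    rw [ae_iff]
    have : {ω | ¬ ω ∈ ({ω | Z ω = b} ∪ {ω | Z ω = c})} =
        ({ω | Z ω = b} ∪ {ω | Z ω = c})ᶜ := rfl
    rw [this, measure_compl (hSb.union hSc) (measure_ne_top _ _), hun, measure_univ, tsub_self]
  have heq : (fun ω => f (Z ω)) =ᵐ[μ]
      (fun ω => ({ω | Z ω = b}.indicator (fun _ => f b) ω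
        + {ω | Z ω = c}.indicator (fun _ => f c) ω)) := by
    filter_upwards [hae] with ω hω
    rcases hω with h | h
    · have h2 : ω ∉ {ω | Z ω = c} := fun hc' => hbc ((h : Z ω = b).symm.trans hc')
      rw [Set.indicator_of_mem h, Set.indicator_of_notMem h2, (h : Z ω = b), add_zero]
    · have h2 : ω ∉ {ω | Z ω = b} := fun hb' => hbc ((hb' : Z ω = b).symm.trans h)
      rw [Set.indicator_of_mem h, Set.indicator_of_notMem h2, (h : Z ω = c), zero_add]
  rw [integral_congr_ae heq, integral_add ((integrable_const (f b)).indicator hSb)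
    ((integrable_const (f c)).indicator hSc), integral_indicator_const _ hSb,
    integral_indicator_const _ hSc, measureReal_def, measureReal_def, hb, hc]
  norm_num
  ring

private lemma indep_head {Ω : Type*} [MeasurableSpace Ω] {μ : Measure Ω}
    {X : ℕ → Ω → ℝ} (hmeas : ∀ n, Measurable (X n))
    (hindep : iIndepFun X μ)
    (n : ℕ) (g : (Fin n → ℝ) → ℝ) (hg : Measurable g) :
    IndepFun (fun ω => g fun i => X i ω) (X n) μ := by
  have h := hindep.indepFun_finset (Finset.range n) {n} (by simp) hmeas
  exact h.comp (φ := fun w : {i // i ∈ Finset.range n} → ℝ =>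
      g (fun i : Fin n => w ⟨(i : ℕ), Finset.mem_range.2 i.2⟩))
    (ψ := fun w : {i // i ∈ ({n} : Finset ℕ)} → ℝ => w ⟨n, Finset.mem_singleton_self n⟩)
    (hg.comp (measurable_pi_lambda _ fun i => measurable_pi_apply _)) (measurable_pi_apply _)

/-- Let `ε > 0` and let `X₁, X₂, ...` be i.i.d. random variables with
`P(Xₙ = 1−ε) = P(Xₙ = 1+ε) = 1/2`.  Set `Yₙ = X₁ ⋯ Xₙ` (`Y₀ = 1`).  Given `a ∈ (0,1)`, the
probability that the hitting time `T_a = inf{n : Yₙ ≥ 1/((1+ε)a)}` is finite is at least `a`. -/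
theorem stmt10 {Ω : Type*} [MeasurableSpace Ω] (μ : Measure Ω) [IsProbabilityMeasure μ]
    (ε a : ℝ) (hε : 0 < ε) (ha : a ∈ Ioo (0:ℝ) 1)
    (X : ℕ → Ω → ℝ)
    (hmeas : ∀ n, Measurable (X n))
    (hindep : iIndepFun X μ)
    (hdist : ∀ n, μ {ω | X n ω = 1 - ε} = 1/2 ∧ μ {ω | X n ω = 1 + ε} = 1/2) :
    ENNReal.ofReal a ≤
      μ {ω | ∃ n : ℕ, 1 / ((1 + ε) * a) ≤ ∏ i ∈ Finset.range n, X i ω} := by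
  obtain ⟨ha0, ha1⟩ := ha
  set c : ℝ := 1 / ((1 + ε) * a) with hc_def
  set E : Set Ω := {ω | ∃ n : ℕ, c ≤ ∏ i ∈ Finset.range n, X i ω} with hE_def
  by_cases hc1 : c ≤ 1
  · have hEuniv : E = Set.univ := Set.eq_univ_of_forall fun ω => ⟨0, by simpa using hc1⟩
    rw [hEuniv, measure_univ]
    exact ENNReal.ofReal_le_one.mpr ha1.le
  push_neg at hc1
  have h1εpos : (0:ℝ) < 1 + ε := by linarith
  by_cases hε1 : 1 ≤ ε
  · -- large ε : use the all-ups event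
    have hex : ∃ n : ℕ, c ≤ (1+ε)^n := by
      obtain ⟨n, hn⟩ := pow_unbounded_of_one_lt c (by linarith : (1:ℝ) < 1 + ε)
      exact ⟨n, hn.le⟩
    set m := Nat.find hex with hm_def
    have hm := Nat.find_spec hex
    have hm0 : m ≠ 0 := by
      intro h
      have hm' : c ≤ (1+ε)^m := hm
      rw [h, pow_zero] at hm'
      linarith
    obtain ⟨j, hj⟩ : ∃ j, m = j + 1 := ⟨m - 1, (Nat.succ_pred_eq_of_ne_zero hm0).symm⟩
    have hprev : (1+ε)^j < c := by
      have := Nat.find_min hex (m := j) (by omega)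
      linarith [not_le.mp this]
    have ham : a * (1+ε)^m < 1 := by
      have h' : (1+ε)^j * ((1+ε)*a) < 1 := by
        rw [hc_def] at hprev
        exact (lt_div_iff₀ (by positivity)).mp hprev
      calc a * (1+ε)^m = (1+ε)^j * ((1+ε)*a) := by rw [hj, pow_succ]; ring
      _ < 1 := h'
    have ha2m : a < (1/2:ℝ)^m := by
      have h2m : (2:ℝ)^m ≤ (1+ε)^m := pow_le_pow_left₀ (by norm_num) (by linarith) m
      have hpos : (0:ℝ) < 2^m := by positivity
      have : a * 2^m < 1 := lt_of_le_of_lt (by nlinarith) ham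
      rw [div_pow, one_pow, lt_div_iff₀ hpos]
      linarith
    set D : Set Ω := ⋂ i ∈ Finset.range m, {ω | X i ω = 1 + ε} with hD_def
    have hDE : D ⊆ E := by
      intro ω hω
      simp only [hD_def, Set.mem_iInter] at hω
      refine ⟨m, ?_⟩
      have : ∏ i ∈ Finset.range m, X i ω = (1+ε)^m := by
        rw [Finset.prod_congr rfl (fun i hi => hω i hi)]
        simp
      rw [this]; exact hm
    have hμD : μ D = (1/2 : ℝ≥0∞)^m := by
      have hD' : D = ⋂ i ∈ Finset.range m, X i ⁻¹' {1+ε} := rfl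
      rw [hD', hindep.meas_biInter (fun i _ => ⟨{1+ε}, measurableSet_singleton _, rfl⟩)]
      have hhalf : ∀ i : ℕ, μ (X i ⁻¹' {1+ε}) = 1/2 := fun i => (hdist i).2
      rw [Finset.prod_congr rfl fun i _ => hhalf i, Finset.prod_const, Finset.card_range]
    calc ENNReal.ofReal a ≤ ENNReal.ofReal ((1/2:ℝ)^m) := ENNReal.ofReal_le_ofReal ha2m.le
    _ = (1/2 : ℝ≥0∞)^m := by
        rw [ENNReal.ofReal_pow (by norm_num)]
        congr 1
        rw [ENNReal.ofReal_div_of_pos (by norm_num), ENNReal.ofReal_one, ENNReal.ofReal_ofNat]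
    _ = μ D := hμD.symm
    _ ≤ μ E := measure_mono hDE
  · push_neg at hε1
    have h1ε : (0:ℝ) < 1 - ε := by linarith
    set Y : ℕ → Ω → ℝ := fun n ω => ∏ i ∈ Finset.range n, X i ω with hY_def
    have hYmeas : ∀ n, Measurable (Y n) := fun n => Finset.measurable_prod _ fun i _ => hmeas i
    set B : ℕ → Set Ω := fun n => {ω | ∀ k, k < n → Y k ω < c} with hB_def
    have hBmem : ∀ (n : ℕ) (ω : Ω), ω ∈ B n ↔ ∀ k, k < n → Y k ω < c := fun n ω => Iff.rfl
    have hBmeas : ∀ n, MeasurableSet (B n) := by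
      intro n
      have hrw : B n = ⋂ k ∈ Finset.range n, {ω | Y k ω < c} := by
        ext ω
        simp only [hBmem, Set.mem_iInter, Finset.mem_range, Set.mem_setOf_eq]
      rw [hrw]
      exact Finset.measurableSet_biInter _ fun k _ => measurableSet_lt (hYmeas k) measurable_const
    set A : ℕ → Set Ω := fun n => B n ∩ {ω | c ≤ Y n ω} with hA_def
    have hAmem : ∀ (n : ℕ) (ω : Ω), ω ∈ A n ↔ ω ∈ B n ∧ c ≤ Y n ω := fun n ω => Iff.rfl
    have hAmeas : ∀ n, MeasurableSet (A n) :=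
      fun n => (hBmeas n).inter (measurableSet_le measurable_const (hYmeas n))
    -- the good set
    have hG : ∀ᵐ ω ∂μ, ∀ n, X n ω = 1 - ε ∨ X n ω = 1 + ε := by
      rw [ae_all_iff]
      intro n
      have hSb : MeasurableSet {ω | X n ω = 1 - ε} := hmeas n (measurableSet_singleton _)
      have hSc : MeasurableSet {ω | X n ω = 1 + ε} := hmeas n (measurableSet_singleton _)
      have hdisj : Disjoint {ω | X n ω = 1 - ε} {ω | X n ω = 1 + ε} := by
        rw [Set.disjoint_left]
        rintro ω h1 h2
        have h3 : (1:ℝ) - ε = 1 + ε := (h1 : X n ω = 1 - ε).symm.trans h2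
        linarith
      have hun : μ ({ω | X n ω = 1 - ε} ∪ {ω | X n ω = 1 + ε}) = 1 := by
        rw [measure_union hdisj hSc, (hdist n).1, (hdist n).2, ENNReal.add_halves]
      rw [ae_iff]
      have hset : {ω | ¬(X n ω = 1 - ε ∨ X n ω = 1 + ε)} =
          ({ω | X n ω = 1 - ε} ∪ {ω | X n ω = 1 + ε})ᶜ := by
        ext ω; simp [Set.mem_union, Set.mem_setOf_eq]
      rw [hset, measure_compl (hSb.union hSc) (measure_ne_top _ _), hun, measure_univ, tsub_self]
    -- pointwise facts on the good set
    have hXpos : ∀ ω, (∀ n, X n ω = 1 - ε ∨ X n ω = 1 + ε) → ∀ i, 0 < X i ω := by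
      intro ω hω i; rcases hω i with h | h <;> rw [h] <;> linarith
    have hXle : ∀ ω, (∀ n, X n ω = 1 - ε ∨ X n ω = 1 + ε) → ∀ i, X i ω ≤ 1 + ε := by
      intro ω hω i; rcases hω i with h | h <;> rw [h] <;> linarith
    have hYpos : ∀ ω, (∀ n, X n ω = 1 - ε ∨ X n ω = 1 + ε) → ∀ n, 0 < Y n ω :=
      fun ω hω n => Finset.prod_pos fun i _ => hXpos ω hω i
    have hYbd : ∀ ω, (∀ n, X n ω = 1 - ε ∨ X n ω = 1 + ε) → ∀ n, Y n ω ≤ (1 + ε)^n := by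
      intro ω hω n
      calc Y n ω ≤ ∏ _i ∈ Finset.range n, (1 + ε) :=
            Finset.prod_le_prod (fun i _ => (hXpos ω hω i).le) (fun i _ => hXle ω hω i)
      _ = (1 + ε)^n := by rw [Finset.prod_const, Finset.card_range]
    have hYBa : ∀ ω, (∀ n, X n ω = 1 - ε ∨ X n ω = 1 + ε) → ∀ n, ω ∈ B n → Y n ω ≤ 1/a := by
      intro ω hω n hB
      cases n with
      | zero =>
        have : Y 0 ω = 1 := Finset.prod_range_zero _
        rw [this, le_div_iff₀ ha0, one_mul]; linarith
      | succ k =>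
        have hk : Y k ω < c := (hBmem _ ω).mp hB k (Nat.lt_succ_self k)
        have hYe : Y (k+1) ω = Y k ω * X k ω := Finset.prod_range_succ _ _
        have hce : c * (1 + ε) = 1/a := by
          rw [hc_def]; field_simp
        rw [hYe, ← hce]
        exact mul_le_mul hk.le (hXle ω hω k) (hXpos ω hω k).le (by linarith)
    have hsqrtY : ∀ ω, (∀ n, X n ω = 1 - ε ∨ X n ω = 1 + ε) →
        ∀ n, Real.sqrt (Y n ω) = ∏ i ∈ Finset.range n, Real.sqrt (X i ω) := by
      intro ω hω n
      induction n with
      | zero => simp [show Y 0 ω = 1 from Finset.prod_range_zero _]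
      | succ k ih =>
        rw [show Y (k+1) ω = Y k ω * X k ω from Finset.prod_range_succ _ _,
          Real.sqrt_mul (hYpos ω hω k).le, ih, Finset.prod_range_succ]
    -- integrability
    have hint : ∀ (f : Ω → ℝ) (C : ℝ), Measurable f → (∀ᵐ ω ∂μ, |f ω| ≤ C) → Integrable f μ :=
      fun f C hf hbd => Integrable.mono' (integrable_const C) hf.aestronglyMeasurable
        (by simpa [Real.norm_eq_abs] using hbd)
    have hYint : ∀ n (s : Set Ω), MeasurableSet s → Integrable (s.indicator (Y n)) μ := by
      intro n s hs
      refine hint _ ((1 + ε)^n) ((hYmeas n).indicator hs) ?_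
      filter_upwards [hG] with ω hω
      have h1 : |Y n ω| ≤ (1 + ε)^n := by
        rw [abs_of_pos (hYpos ω hω n)]; exact hYbd ω hω n
      refine le_trans ?_ h1
      by_cases h : ω ∈ s
      · rw [Set.indicator_of_mem h]
      · rw [Set.indicator_of_notMem h]; simp [abs_nonneg]
    -- the sqrt product process
    set S : ℕ → Ω → ℝ := fun n ω => ∏ i ∈ Finset.range n, Real.sqrt (X i ω) with hS_def
    have hSmeas : ∀ n, Measurable (S n) :=
      fun n => Finset.measurable_prod _ fun i _ => (hmeas i).sqrt
    have hSnonneg : ∀ n ω, 0 ≤ S n ω :=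
      fun n ω => Finset.prod_nonneg fun i _ => Real.sqrt_nonneg _
    have hSint : ∀ n, Integrable (S n) μ := by
      intro n
      refine hint _ (2^n) (hSmeas n) ?_
      filter_upwards [hG] with ω hω
      rw [abs_of_nonneg (hSnonneg n ω)]
      calc S n ω ≤ ∏ _i ∈ Finset.range n, 2 := by
            refine Finset.prod_le_prod (fun i _ => Real.sqrt_nonneg _) (fun i _ => ?_)
            rw [show (2:ℝ) = Real.sqrt 4 by
              rw [show (4:ℝ) = 2^2 by norm_num, Real.sqrt_sq (by norm_num)]]
            exact Real.sqrt_le_sqrt (by have := hXle ω hω i; linarith)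
      _ = 2^n := by rw [Finset.prod_const, Finset.card_range]
    -- the ratio r
    set r : ℝ := (Real.sqrt (1 - ε) + Real.sqrt (1 + ε))/2 with hr_def
    have hr0 : (0:ℝ) ≤ r := by positivity
    have hr1 : r < 1 := by
      have hs0 := Real.sqrt_nonneg (1 - ε)
      have ht0 := Real.sqrt_nonneg (1 + ε)
      have hs2 : Real.sqrt (1 - ε)^2 = 1 - ε := Real.sq_sqrt h1ε.le
      have ht2 : Real.sqrt (1 + ε)^2 = 1 + ε := Real.sq_sqrt h1εpos.le
      have hst : Real.sqrt (1 - ε) * Real.sqrt (1 + ε) < 1 := by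
        nlinarith [mul_nonneg hs0 ht0, sq_nonneg (Real.sqrt (1 - ε) * Real.sqrt (1 + ε) - 1)]
      rw [hr_def]
      nlinarith [sq_nonneg (Real.sqrt (1 - ε) + Real.sqrt (1 + ε) - 2)]
    -- one-step integrals
    have hne : (1:ℝ) - ε ≠ 1 + ε := by intro h; linarith
    have hEX : ∀ n, ∫ ω, X n ω ∂μ = 1 := by
      intro n
      calc ∫ ω, X n ω ∂μ = ((1 - ε) + (1 + ε))/2 :=
            twoPoint_integral μ (X n) (hmeas n) hne (hdist n).1 (hdist n).2 id
      _ = 1 := by ring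
    have hESX : ∀ n, ∫ ω, Real.sqrt (X n ω) ∂μ = r :=
      fun n => twoPoint_integral μ (X n) (hmeas n) hne (hdist n).1 (hdist n).2 Real.sqrt
    have hES : ∀ n, ∫ ω, S n ω ∂μ = r^n := by
      intro n
      induction n with
      | zero => simp [show S 0 = fun _ => 1 from funext fun ω => Finset.prod_range_zero _]
      | succ k ih =>
        have hI : IndepFun (S k) (X k) μ := by
          have hg : Measurable (fun v : Fin k → ℝ => ∏ i, Real.sqrt (v i)) :=
            Finset.measurable_prod _ fun i _ => (measurable_pi_apply i).sqrt
          have h := indep_head hmeas hindep k _ hg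
          have heq : (fun ω => ∏ i : Fin k, Real.sqrt (X i ω)) = S k := by
            funext ω
            exact Fin.prod_univ_eq_prod_range (fun i => Real.sqrt (X i ω)) k
          rwa [heq] at h
        have hI2 : IndepFun (S k) (fun ω => Real.sqrt (X k ω)) μ :=
          hI.comp measurable_id measurable_id.sqrt
        have hmul := IndepFun.integral_mul_eq_mul_integral hI2 (hSmeas k).aestronglyMeasurable
          ((hmeas k).sqrt).aestronglyMeasurable
        have hfe : S (k+1) = S k * (fun ω => Real.sqrt (X k ω)) := by
          funext ω
          exact Finset.prod_range_succ _ _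
        calc ∫ ω, S (k+1) ω ∂μ
            = ∫ ω, (S k * fun ω => Real.sqrt (X k ω)) ω ∂μ := by rw [hfe]
        _ = (∫ ω, S k ω ∂μ) * ∫ ω, Real.sqrt (X k ω) ∂μ := hmul
        _ = r^k * r := by rw [ih, hESX k]
        _ = r^(k+1) := by rw [pow_succ]
    -- the key martingale identity
    have hkey : ∀ n, (1:ℝ) = (∑ k ∈ Finset.range n, ∫ ω, (A k).indicator (Y k) ω ∂μ)
        + ∫ ω, (B n).indicator (Y n) ω ∂μ := by
      intro n
      induction n with
      | zero =>
        have hB0 : B 0 = Set.univ := by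
          ext ω; simp [hBmem]
        have hY0 : Y 0 = fun _ => 1 := funext fun ω => Finset.prod_range_zero _
        rw [Finset.range_zero, Finset.sum_empty, hB0, hY0]
        simp
      | succ n ih =>
        have hsplit : ∫ ω, (B n).indicator (Y n) ω ∂μ
            = ∫ ω, (A n).indicator (Y n) ω ∂μ + ∫ ω, (B (n+1)).indicator (Y n) ω ∂μ := by
          rw [← integral_add (hYint n _ (hAmeas n)) (hYint n _ (hBmeas (n+1)))]
          apply integral_congr_ae
          apply Filter.Eventually.of_forall
          intro ω
          show (B n).indicator (Y n) ω = (A n).indicator (Y n) ω + (B (n+1)).indicator (Y n) ω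
          by_cases hBn : ω ∈ B n
          · by_cases hcY : c ≤ Y n ω
            · have hA : ω ∈ A n := (hAmem n ω).mpr ⟨hBn, hcY⟩
              have hB' : ω ∉ B (n+1) := by
                intro h
                exact absurd ((hBmem _ ω).mp h n (Nat.lt_succ_self n)) (not_lt.mpr hcY)
              rw [Set.indicator_of_mem hBn, Set.indicator_of_mem hA,
                Set.indicator_of_notMem hB', add_zero]
            · have hA : ω ∉ A n := fun h => hcY ((hAmem n ω).mp h).2
              have hB' : ω ∈ B (n+1) := by
                rw [hBmem]
                intro k hk
                rcases Nat.lt_succ_iff_lt_or_eq.mp hk with h | h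
                · exact (hBmem _ ω).mp hBn k h
                · rw [h]; exact lt_of_not_ge hcY
              rw [Set.indicator_of_mem hBn, Set.indicator_of_notMem hA,
                Set.indicator_of_mem hB', zero_add]
          · have hA : ω ∉ A n := fun h => hBn ((hAmem n ω).mp h).1
            have hB' : ω ∉ B (n+1) := by
              intro h
              exact hBn ((hBmem _ ω).mpr fun k hk =>
                (hBmem _ ω).mp h k (hk.trans (Nat.lt_succ_self n)))
            rw [Set.indicator_of_notMem hBn, Set.indicator_of_notMem hA,
              Set.indicator_of_notMem hB', add_zero]
        have hstep : ∫ ω, (B (n+1)).indicator (Y n) ω ∂μ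
            = ∫ ω, (B (n+1)).indicator (Y (n+1)) ω ∂μ := by
          classical
          set g : (Fin n → ℝ) → ℝ := fun v =>
            if (∀ k ∈ Finset.range (n+1), (∏ i : Fin n, if (i:ℕ) < k then v i else 1) < c)
            then ∏ i : Fin n, v i else 0 with hg_def
          have hfac : ∀ (k : ℕ) (i : Fin n),
              Measurable (fun v : Fin n → ℝ => if (i:ℕ) < k then v i else 1) := by
            intro k i
            by_cases h : (i:ℕ) < k
            · simp only [if_pos h]; exact measurable_pi_apply i
            · simp only [if_neg h]; exact measurable_const
          have hgmeas : Measurable g := by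
            refine Measurable.ite ?_
              (Finset.measurable_prod _ fun i _ => measurable_pi_apply i) measurable_const
            have hrw : {v : Fin n → ℝ | ∀ k ∈ Finset.range (n+1),
                (∏ i : Fin n, if (i:ℕ) < k then v i else 1) < c}
                = ⋂ k ∈ Finset.range (n+1),
                  {v : Fin n → ℝ | (∏ i : Fin n, if (i:ℕ) < k then v i else 1) < c} := by
              ext v; simp
            rw [hrw]
            exact Finset.measurableSet_biInter _ fun k _ =>
              measurableSet_lt (Finset.measurable_prod _ fun i _ => hfac k i) measurable_const
          have hpr : ∀ ω (k : ℕ), k ≤ n →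
              (∏ i : Fin n, if (i:ℕ) < k then X i ω else 1) = Y k ω := by
            intro ω k hk
            rw [Fin.prod_univ_eq_prod_range (fun i => if i < k then X i ω else 1) n,
              ← Finset.prod_filter]
            have hflt : (Finset.range n).filter (· < k) = Finset.range k := by
              ext i
              simp only [Finset.mem_filter, Finset.mem_range]
              omega
            rw [hflt]
          have hgY : (fun ω => g (fun i : Fin n => X i ω)) = (B (n+1)).indicator (Y n) := by
            funext ω
            have hcond : (∀ k ∈ Finset.range (n+1),
                (∏ i : Fin n, if (i:ℕ) < k then X i ω else 1) < c) ↔ ω ∈ B (n+1) := by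
              rw [hBmem]
              constructor
              · intro h k hk
                have h2 := h k (Finset.mem_range.mpr hk)
                rwa [hpr ω k (by omega)] at h2
              · intro h k hk
                rw [hpr ω k (Nat.lt_succ_iff.mp (Finset.mem_range.mp hk))]
                exact h k (Finset.mem_range.mp hk)
            by_cases hmem : ω ∈ B (n+1)
            · rw [hg_def]
              simp only []
              rw [if_pos (hcond.mpr hmem), Set.indicator_of_mem hmem]
              exact Fin.prod_univ_eq_prod_range (fun i => X i ω) n
            · rw [hg_def]
              simp only []
              rw [if_neg (fun h => hmem (hcond.mp h)), Set.indicator_of_notMem hmem]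
          have hIF : IndepFun ((B (n+1)).indicator (Y n)) (X n) μ := by
            have h := indep_head hmeas hindep n g hgmeas
            rwa [hgY] at h
          have hmul := IndepFun.integral_mul_eq_mul_integral hIF
            (((hYmeas n).indicator (hBmeas (n+1))).aestronglyMeasurable)
            (hmeas n).aestronglyMeasurable
          have hfe : (B (n+1)).indicator (Y (n+1)) = ((B (n+1)).indicator (Y n)) * X n := by
            funext ω
            rw [Pi.mul_apply]
            by_cases h : ω ∈ B (n+1)
            · rw [Set.indicator_of_mem h, Set.indicator_of_mem h]
              exact Finset.prod_range_succ _ _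
            · rw [Set.indicator_of_notMem h, Set.indicator_of_notMem h, zero_mul]
          calc ∫ ω, (B (n+1)).indicator (Y n) ω ∂μ
              = (∫ ω, (B (n+1)).indicator (Y n) ω ∂μ) * ∫ ω, X n ω ∂μ := by
                rw [hEX n, mul_one]
          _ = ∫ ω, ((B (n+1)).indicator (Y n) * X n) ω ∂μ := hmul.symm
          _ = ∫ ω, (B (n+1)).indicator (Y (n+1)) ω ∂μ := by rw [← hfe]
        rw [Finset.sum_range_succ]
        have hco := hsplit.trans (by rw [hstep])
        linarith [ih]
    -- bounds on the pieces
    have hAbound : ∀ k, ∫ ω, (A k).indicator (Y k) ω ∂μ ≤ (1/a) * (μ (A k)).toReal := by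
      intro k
      have h1 : ∫ ω, (A k).indicator (fun _ => 1/a) ω ∂μ = (μ (A k)).toReal • (1/a : ℝ) :=
        integral_indicator_const _ (hAmeas k)
      have h2 : ∫ ω, (A k).indicator (Y k) ω ∂μ ≤ ∫ ω, (A k).indicator (fun _ => 1/a) ω ∂μ := by
        apply integral_mono_ae (hYint k _ (hAmeas k)) ((integrable_const _).indicator (hAmeas k))
        filter_upwards [hG] with ω hω
        by_cases h : ω ∈ A k
        · rw [Set.indicator_of_mem h, Set.indicator_of_mem h]
          exact hYBa ω hω k ((hAmem k ω).mp h).1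
        · rw [Set.indicator_of_notMem h, Set.indicator_of_notMem h]
      calc ∫ ω, (A k).indicator (Y k) ω ∂μ ≤ (μ (A k)).toReal • (1/a : ℝ) := h2.trans_eq h1
      _ = (1/a) * (μ (A k)).toReal := by rw [smul_eq_mul, mul_comm]
    have hBbound : ∀ n, ∫ ω, (B n).indicator (Y n) ω ∂μ ≤ (1/Real.sqrt a) * r^n := by
      intro n
      have hsa : (0:ℝ) < Real.sqrt a := Real.sqrt_pos.mpr ha0
      have h2 : ∫ ω, (B n).indicator (Y n) ω ∂μ ≤ ∫ ω, (1/Real.sqrt a) * S n ω ∂μ := by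
        apply integral_mono_ae (hYint n _ (hBmeas n)) ((hSint n).const_mul _)
        filter_upwards [hG] with ω hω
        by_cases h : ω ∈ B n
        · rw [Set.indicator_of_mem h]
          have hya : Y n ω ≤ 1/a := hYBa ω hω n h
          have hs : Real.sqrt (Y n ω) * Real.sqrt (Y n ω) = Y n ω :=
            Real.mul_self_sqrt (hYpos ω hω n).le
          have hle : Real.sqrt (Y n ω) ≤ 1/Real.sqrt a := by
            rw [show (1:ℝ)/Real.sqrt a = Real.sqrt (1/a) by
              rw [one_div, one_div, Real.sqrt_inv]]
            exact Real.sqrt_le_sqrt hya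
          calc Y n ω = Real.sqrt (Y n ω) * Real.sqrt (Y n ω) := hs.symm
          _ ≤ (1/Real.sqrt a) * Real.sqrt (Y n ω) :=
              mul_le_mul_of_nonneg_right hle (Real.sqrt_nonneg _)
          _ = (1/Real.sqrt a) * S n ω := by rw [hsqrtY ω hω n]
        · rw [Set.indicator_of_notMem h]
          exact mul_nonneg (by positivity) (hSnonneg n ω)
      calc ∫ ω, (B n).indicator (Y n) ω ∂μ ≤ ∫ ω, (1/Real.sqrt a) * S n ω ∂μ := h2
      _ = (1/Real.sqrt a) * ∫ ω, S n ω ∂μ := integral_const_mul _ _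
      _ = (1/Real.sqrt a) * r^n := by rw [hES n]
    -- disjointness and the union bound
    have hsum : ∀ n, ∑ k ∈ Finset.range n, (μ (A k)).toReal ≤ (μ E).toReal := by
      intro n
      have hdisj : (↑(Finset.range n) : Set ℕ).Pairwise (Function.onFun Disjoint fun k => A k) := by
        intro j _ k _ hjk
        rcases Nat.lt_or_ge j k with h | h
        · rw [Function.onFun, Set.disjoint_left]
          intro ω hj hk
          exact absurd ((hBmem k ω).mp ((hAmem k ω).mp hk).1 j h)
            (not_lt.mpr ((hAmem j ω).mp hj).2)
        · have h' : k < j := by omega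
          rw [Function.onFun, Set.disjoint_right]
          intro ω hk hj
          exact absurd ((hBmem j ω).mp ((hAmem j ω).mp hj).1 k h')
            (not_lt.mpr ((hAmem k ω).mp hk).2)
      have hU : μ (⋃ k ∈ Finset.range n, A k) = ∑ k ∈ Finset.range n, μ (A k) :=
        measure_biUnion_finset hdisj fun k _ => hAmeas k
      have hsub : (⋃ k ∈ Finset.range n, A k) ⊆ E := by
        intro ω hω
        rw [Set.mem_iUnion] at hω
        obtain ⟨k, hk⟩ := hω
        rw [Set.mem_iUnion] at hk
        obtain ⟨-, hk⟩ := hk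
        exact ⟨k, ((hAmem k ω).mp hk).2⟩
      calc ∑ k ∈ Finset.range n, (μ (A k)).toReal
          = (∑ k ∈ Finset.range n, μ (A k)).toReal :=
            (ENNReal.toReal_sum fun k _ => measure_ne_top μ _).symm
      _ = (μ (⋃ k ∈ Finset.range n, A k)).toReal := by rw [hU]
      _ ≤ (μ E).toReal := ENNReal.toReal_mono (measure_ne_top μ E) (measure_mono hsub)
    -- combine and take the limit
    have hmain : ∀ n, (1:ℝ) ≤ (1/a) * (μ E).toReal + (1/Real.sqrt a) * r^n := by
      intro n
      have h1 : ∑ k ∈ Finset.range n, ∫ ω, (A k).indicator (Y k) ω ∂μ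
          ≤ (1/a) * (μ E).toReal := by
        calc ∑ k ∈ Finset.range n, ∫ ω, (A k).indicator (Y k) ω ∂μ
            ≤ ∑ k ∈ Finset.range n, (1/a) * (μ (A k)).toReal :=
              Finset.sum_le_sum fun k _ => hAbound k
        _ = (1/a) * ∑ k ∈ Finset.range n, (μ (A k)).toReal := by rw [Finset.mul_sum]
        _ ≤ (1/a) * (μ E).toReal :=
            mul_le_mul_of_nonneg_left (hsum n) (by positivity)
      linarith [hkey n, hBbound n]
    have hlim : Filter.Tendsto (fun n : ℕ => (1/a) * (μ E).toReal + (1/Real.sqrt a) * r^n)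
        Filter.atTop (nhds ((1/a) * (μ E).toReal)) := by
      have h1 := (tendsto_pow_atTop_nhds_zero_of_lt_one hr0 hr1).const_mul (1/Real.sqrt a)
      have h2 := Filter.Tendsto.add
        (tendsto_const_nhds : Filter.Tendsto (fun _ : ℕ => (1/a) * (μ E).toReal)
          Filter.atTop (nhds ((1/a) * (μ E).toReal))) h1
      simpa using h2
    have hfin : (1:ℝ) ≤ (1/a) * (μ E).toReal :=
      ge_of_tendsto hlim (Filter.Eventually.of_forall hmain)
    have haE : a ≤ (μ E).toReal := by
      have hinv : a * (1/a) = 1 := by field_simp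
      nlinarith [hfin, ha0]
    calc ENNReal.ofReal a ≤ ENNReal.ofReal (μ E).toReal := ENNReal.ofReal_le_ofReal haE
    _ = μ E := ENNReal.ofReal_toReal (measure_ne_top μ E)
end

section
/- Let σ and ω be locally finite positive Borel measures on ℝⁿ and let Φ : ℝⁿ → ℝⁿ be biLipschitz. Then the two-weight A₂ characteristic satisfies A₂(Φ_*σ, Φ_*ω) ≤ C ‖Φ‖_biLip^{4n} A₂(σ, ω), where C depends only on n, Φ_*μ denotes pushforward, and A₂(σ,ω) = sup over cubes Q of (σ(Q)/|Q|)(ω(Q)/|Q|). -/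
open MeasureTheory Set ENNReal NNReal

/-- The axis-parallel cube in `ℝⁿ` with lower corner `c` and side length `r`. -/
def euCube {n : ℕ} (c : EuclideanSpace ℝ (Fin n)) (r : ℝ) : Set (EuclideanSpace ℝ (Fin n)) :=
  {x | ∀ i, c i ≤ x i ∧ x i ≤ c i + r}

/-- The two-weight `A₂` characteristic of a pair of measures on `ℝⁿ`:
`A₂(σ,ω) = sup_Q (σ(Q)/|Q|)(ω(Q)/|Q|)` over all axis-parallel cubes `Q`. -/
noncomputable def A2char {n : ℕ} (σ ω : Measure (EuclideanSpace ℝ (Fin n))) : ℝ≥0∞ :=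
  ⨆ (c : EuclideanSpace ℝ (Fin n)) (r : ℝ) (_ : 0 < r),
    (σ (euCube c r) / volume (euCube c r)) * (ω (euCube c r) / volume (euCube c r))

lemma euCube_eq {n : ℕ} (c : EuclideanSpace ℝ (Fin n)) (r : ℝ) :
    euCube c r = ((MeasurableEquiv.toLp 2 (Fin n → ℝ)).symm) ⁻¹'
      (Set.univ.pi fun i => Icc (c i) (c i + r)) := by
  ext x
  exact ⟨fun h i _ => h i, fun h i => h i (mem_univ i)⟩

lemma measurableSet_euCube {n : ℕ} (c : EuclideanSpace ℝ (Fin n)) (r : ℝ) :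
    MeasurableSet (euCube c r) := by
  rw [euCube_eq]
  exact (MeasurableEquiv.toLp 2 (Fin n → ℝ)).symm.measurable
    (MeasurableSet.univ_pi fun i => measurableSet_Icc)

lemma volume_euCube {n : ℕ} (c : EuclideanSpace ℝ (Fin n)) (r : ℝ) :
    volume (euCube c r) = ENNReal.ofReal r ^ n := by
  rw [euCube_eq,
    (EuclideanSpace.volume_preserving_symm_measurableEquiv_toLp (Fin n)).measure_preimage
      (MeasurableSet.univ_pi fun i => measurableSet_Icc).nullMeasurableSet]
  rw [volume_pi_pi]
  simp [Real.volume_Icc]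

lemma dist_coord_le {n : ℕ} (x y : EuclideanSpace ℝ (Fin n)) (i : Fin n) :
    dist (x i) (y i) ≤ dist x y := by
  rw [EuclideanSpace.dist_eq]
  have h1 : dist (x i) (y i) ^ 2 ≤ ∑ j, dist (x j) (y j) ^ 2 :=
    Finset.single_le_sum (f := fun j => dist (x j) (y j) ^ 2)
      (fun j _ => sq_nonneg _) (Finset.mem_univ i)
  calc dist (x i) (y i) = Real.sqrt (dist (x i) (y i) ^ 2) := by
        rw [Real.sqrt_sq dist_nonneg]
    _ ≤ _ := Real.sqrt_le_sqrt h1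

lemma diam_euCube {n : ℕ} {c : EuclideanSpace ℝ (Fin n)} {r : ℝ} (hr : 0 ≤ r)
    {x y : EuclideanSpace ℝ (Fin n)} (hx : x ∈ euCube c r) (hy : y ∈ euCube c r) :
    dist x y ≤ (n + 1) * r := by
  rw [EuclideanSpace.dist_eq]
  have h1 : ∀ j : Fin n, dist (x j) (y j) ^ 2 ≤ r ^ 2 := by
    intro j
    have hx' := hx j; have hy' := hy j
    have : |x j - y j| ≤ r := by rw [abs_le]; constructor <;> [linarith; linarith]
    calc dist (x j) (y j) ^ 2 = |x j - y j| ^ 2 := by rw [Real.dist_eq]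
      _ ≤ r ^ 2 := by nlinarith [abs_nonneg (x j - y j)]
  calc Real.sqrt (∑ j, dist (x j) (y j) ^ 2) ≤ Real.sqrt (((n : ℝ) + 1) ^ 2 * r ^ 2) := by
        apply Real.sqrt_le_sqrt
        calc ∑ j, dist (x j) (y j) ^ 2 ≤ ∑ _j : Fin n, r ^ 2 :=
              Finset.sum_le_sum (fun j _ => h1 j)
          _ = n * r ^ 2 := by simp [Finset.card_univ]
          _ ≤ ((n : ℝ) + 1) ^ 2 * r ^ 2 := by
              have hn : (0:ℝ) ≤ n := Nat.cast_nonneg n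
              have h2 : (n:ℝ) ≤ ((n:ℝ)+1)^2 := by nlinarith
              exact mul_le_mul_of_nonneg_right h2 (sq_nonneg r)
    _ = ((n : ℝ) + 1) * r := by
        rw [← mul_pow, Real.sqrt_sq (by positivity)]

lemma preimage_subset_euCube {n : ℕ} {K : ℝ≥0} (hK : 1 ≤ K)
    {Φ Ψ : EuclideanSpace ℝ (Fin n) → EuclideanSpace ℝ (Fin n)}
    (hΨ : LipschitzWith K Ψ) (hl : Function.LeftInverse Ψ Φ)
    (c : EuclideanSpace ℝ (Fin n)) {r : ℝ} (hr : 0 < r) :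
    Φ ⁻¹' euCube c r ⊆
      euCube (WithLp.toLp 2 (fun i => Ψ c i - (K : ℝ) * (n + 1) * r)) (2 * K * (n + 1) * r) := by
  intro x hx
  have hc : c ∈ euCube c r := fun i => ⟨le_refl _, by linarith⟩
  have hd : dist (Φ x) c ≤ (n + 1) * r := diam_euCube hr.le hx hc
  have hxp : dist x (Ψ c) ≤ (K : ℝ) * ((n + 1) * r) := by
    calc dist x (Ψ c) = dist (Ψ (Φ x)) (Ψ c) := by rw [hl x]
      _ ≤ K * dist (Φ x) c := hΨ.dist_le_mul _ _
      _ ≤ K * ((n + 1) * r) := by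
          exact mul_le_mul_of_nonneg_left hd K.coe_nonneg
  intro i
  have h1 : |x i - Ψ c i| ≤ (K : ℝ) * ((n + 1) * r) := by
    calc |x i - Ψ c i| = dist (x i) (Ψ c i) := (Real.dist_eq _ _).symm
      _ ≤ dist x (Ψ c) := dist_coord_le x (Ψ c) i
      _ ≤ _ := hxp
  rw [abs_le] at h1
  constructor <;> [skip; skip] <;> simp only [PiLp.toLp_apply] <;> nlinarith [h1.1, h1.2]

lemma ennreal_arith (a b v m : ℝ≥0∞) (hv0 : v ≠ 0) (hvt : v ≠ ⊤) (hm0 : m ≠ 0)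
    (hmt : m ≠ ⊤) (n : ℕ) :
    (a / v ^ n) * (b / v ^ n) = m ^ (2 * n) * ((a / (m * v) ^ n) * (b / (m * v) ^ n)) := by
  have hmn0 : m ^ n ≠ 0 := pow_ne_zero n hm0
  have hmnt : m ^ n ≠ ⊤ := ENNReal.pow_ne_top hmt
  have key : ∀ x : ℝ≥0∞, m ^ n * (x / (m * v) ^ n) = x / v ^ n := by
    intro x
    rw [mul_pow, div_eq_mul_inv, ENNReal.mul_inv (Or.inl hmn0) (Or.inl hmnt),
      div_eq_mul_inv]
    calc m ^ n * (x * ((m ^ n)⁻¹ * (v ^ n)⁻¹))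
        = (m ^ n * (m ^ n)⁻¹) * (x * (v ^ n)⁻¹) := by ring
      _ = x * (v ^ n)⁻¹ := by rw [ENNReal.mul_inv_cancel hmn0 hmnt, one_mul]
  calc (a / v ^ n) * (b / v ^ n)
      = (m ^ n * (a / (m * v) ^ n)) * (m ^ n * (b / (m * v) ^ n)) := by
        rw [key, key]
    _ = (m ^ n * m ^ n) * ((a / (m * v) ^ n) * (b / (m * v) ^ n)) := by ring
    _ = m ^ (2 * n) * ((a / (m * v) ^ n) * (b / (m * v) ^ n)) := by
        rw [← pow_add, two_mul]

/-- If `Φ : ℝⁿ → ℝⁿ` is biLipschitz (with `K` a biLipschitz bound for `Φ` and its inverse `Ψ`),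
then `A₂(Φ_*σ, Φ_*ω) ≤ C · K^{4n} · A₂(σ,ω)` for all locally finite positive Borel measures
`σ, ω`, where `C` depends only on `n`. -/
theorem stmt11 (n : ℕ) :
    ∃ C : ℝ≥0∞, 0 < C ∧ C < ⊤ ∧
      ∀ (Φ Ψ : EuclideanSpace ℝ (Fin n) → EuclideanSpace ℝ (Fin n)) (K : ℝ≥0),
        1 ≤ K →
        LipschitzWith K Φ → LipschitzWith K Ψ →
        Function.LeftInverse Ψ Φ → Function.RightInverse Ψ Φ →
        ∀ (σ ω : Measure (EuclideanSpace ℝ (Fin n))),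
          IsLocallyFiniteMeasure σ → IsLocallyFiniteMeasure ω →
          A2char (Measure.map Φ σ) (Measure.map Φ ω) ≤ C * (K : ℝ≥0∞) ^ (4 * n) * A2char σ ω := by
  refine ⟨(ENNReal.ofReal (2 * ((n : ℝ) + 1))) ^ (2 * n), ?_, ?_, ?_⟩
  · exact ENNReal.pow_pos (ENNReal.ofReal_pos.2 (by positivity)) _
  · exact ENNReal.pow_lt_top ENNReal.ofReal_lt_top
  intro Φ Ψ K hK hΦ hΨ hl hr' σ ω _ _
  set C : ℝ≥0∞ := (ENNReal.ofReal (2 * ((n : ℝ) + 1))) ^ (2 * n) with hC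
  have hK0 : (0 : ℝ) < K := lt_of_lt_of_le one_pos hK
  refine iSup_le fun c => iSup_le fun r => iSup_le fun hr => ?_
  -- notation
  set r' : ℝ := 2 * (K : ℝ) * ((n : ℝ) + 1) * r with hr'def
  have hr'pos : 0 < r' := by positivity
  set c' : EuclideanSpace ℝ (Fin n) := WithLp.toLp 2 (fun i => Ψ c i - (K : ℝ) * ((n : ℝ) + 1) * r) with hc'
  set v : ℝ≥0∞ := ENNReal.ofReal r with hv
  set m : ℝ≥0∞ := ENNReal.ofReal (2 * (K : ℝ) * ((n : ℝ) + 1)) with hm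
  have hv0 : v ≠ 0 := (ENNReal.ofReal_pos.2 hr).ne'
  have hvt : v ≠ ⊤ := ENNReal.ofReal_ne_top
  have hm0 : m ≠ 0 := (ENNReal.ofReal_pos.2 (by positivity)).ne'
  have hmt : m ≠ ⊤ := ENNReal.ofReal_ne_top
  have hΦm : Measurable Φ := hΦ.continuous.measurable
  have hsub : Φ ⁻¹' euCube c r ⊆ euCube c' r' := by
    exact preimage_subset_euCube hK hΨ hl c hr
  have hmapσ : (Measure.map Φ σ) (euCube c r) ≤ σ (euCube c' r') := by
    rw [Measure.map_apply hΦm (measurableSet_euCube c r)]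
    exact measure_mono hsub
  have hmapω : (Measure.map Φ ω) (euCube c r) ≤ ω (euCube c' r') := by
    rw [Measure.map_apply hΦm (measurableSet_euCube c r)]
    exact measure_mono hsub
  have hvolQ : volume (euCube c r) = v ^ n := volume_euCube c r
  have hvolP : volume (euCube c' r') = (m * v) ^ n := by
    rw [volume_euCube, hr'def, ENNReal.ofReal_mul (by positivity)]
  have step1 :
      (Measure.map Φ σ) (euCube c r) / volume (euCube c r) *
        ((Measure.map Φ ω) (euCube c r) / volume (euCube c r)) ≤
      σ (euCube c' r') / v ^ n * (ω (euCube c' r') / v ^ n) := by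
    rw [hvolQ]
    exact mul_le_mul' (ENNReal.div_le_div_right hmapσ _)
      (ENNReal.div_le_div_right hmapω _)
  have step2 :
      σ (euCube c' r') / v ^ n * (ω (euCube c' r') / v ^ n) =
      m ^ (2 * n) * (σ (euCube c' r') / volume (euCube c' r') *
        (ω (euCube c' r') / volume (euCube c' r'))) := by
    rw [hvolP]
    exact ennreal_arith _ _ v m hv0 hvt hm0 hmt n
  have step3 :
      σ (euCube c' r') / volume (euCube c' r') *
        (ω (euCube c' r') / volume (euCube c' r')) ≤ A2char σ ω :=
    le_iSup_of_le c' (le_iSup_of_le r' (le_iSup_of_le hr'pos le_rfl))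
  have hmle : m ^ (2 * n) ≤ C * (K : ℝ≥0∞) ^ (4 * n) := by
    have hm_eq : m = ENNReal.ofReal (2 * ((n : ℝ) + 1)) * (K : ℝ≥0∞) := by
      rw [hm, ← ENNReal.ofReal_coe_nnreal, ← ENNReal.ofReal_mul (by positivity)]
      congr 1
      ring
    rw [hm_eq, mul_pow, hC]
    gcongr
    · exact le_trans (by exact_mod_cast hK) le_rfl
    · omega
  calc (Measure.map Φ σ) (euCube c r) / volume (euCube c r) *
        ((Measure.map Φ ω) (euCube c r) / volume (euCube c r))
      ≤ σ (euCube c' r') / v ^ n * (ω (euCube c' r') / v ^ n) := step1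
    _ = m ^ (2 * n) * (σ (euCube c' r') / volume (euCube c' r') *
        (ω (euCube c' r') / volume (euCube c' r'))) := step2
    _ ≤ m ^ (2 * n) * A2char σ ω := mul_le_mul_right step3 _
    _ ≤ C * (K : ℝ≥0∞) ^ (4 * n) * A2char σ ω := mul_le_mul_left hmle _
end
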